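/- (Proposition 2, tripling map: preservation of the Hamiltonian.) Let A, B, q, p ∈ ℂ with p ≠ 0 and D := 4B²q⁸ + 4ABq⁶ + 8Bq⁴p² + A²q⁴ + 2Aq²p² + p⁴ ≠ 0. Define q' = q - 4qp²(2Bq⁴ + Aq² + p²)/D and p' = -p + (q' - q)·(A(q' + q) + 2B(3q' - q)q²)/(2p) + (q' - q)²·(2Bq³ + Aq)²/(2p³). Then p'² + A·q'² + B·q'⁴ = p² + A·q² + B·q⁴, i.e. the discrete map (q, p) ↦ (q', p') induced by tripling a point on the elliptic curve y² + Ax² + Bx⁴ - E = 0 preserves the Hamiltonian H = p² + Aq² + Bq⁴ of the Duffing oscillator. -/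

import Mathlib

set_option maxHeartbeats 2000000

/-- Proposition 2, tripling map: the discrete map `(q,p) ↦ (q',p')`
induced by tripling a point on the elliptic curve `y² + Ax² + Bx⁴ - E = 0` preserves
the Duffing Hamiltonian `H = p² + Aq² + Bq⁴`. -/
theorem duffing_tripling_map_preserves_hamiltonian
    (A B q p D q' p' : ℂ)
    (hp : p ≠ 0)
    (hD : D = 4 * B ^ 2 * q ^ 8 + 4 * A * B * q ^ 6 + 8 * B * q ^ 4 * p ^ 2
        + A ^ 2 * q ^ 4 + 2 * A * q ^ 2 * p ^ 2 + p ^ 4)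
    (hD0 : D ≠ 0)
    (hq' : q' = q - 4 * q * p ^ 2 * (2 * B * q ^ 4 + A * q ^ 2 + p ^ 2) / D)
    (hp' : p' = -p + (q' - q) * (A * (q' + q) + 2 * B * (3 * q' - q) * q ^ 2) / (2 * p)
        + (q' - q) ^ 2 * (2 * B * q ^ 3 + A * q) ^ 2 / (2 * p ^ 3)) :
    p' ^ 2 + A * q' ^ 2 + B * q' ^ 4 = p ^ 2 + A * q ^ 2 + B * q ^ 4 := by
  subst hD
  have hqD : q' * (4*B^2*q^8 + 4*A*B*q^6 + 8*B*q^4*p^2 + A^2*q^4 + 2*A*q^2*p^2 + p^4) = q * (4*B^2*q^8 + 4*A*B*q^6 + 8*B*q^4*p^2 + A^2*q^4 + 2*A*q^2*p^2 + p^4) - 4*q*p^2*(2*B*q^4 + A*q^2 + p^2) := by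
    rw [hq', sub_mul, div_mul_cancel₀ _ hD0]
  have hP : p' * (2*p^3) = (-2*p^4 + (q'-q)*p^2*(A*(q'+q)+2*B*(3*q'-q)*q^2) + (q'-q)^2*(2*B*q^3+A*q)^2) := by
    rw [hp']; field_simp
  have hzero : (p'^2 + A*q'^2 + B*q'^4 - (p^2 + A*q^2 + B*q^4)) * (4*p^6*(4*B^2*q^8 + 4*A*B*q^6 + 8*B*q^4*p^2 + A^2*q^4 + 2*A*q^2*p^2 + p^4)^4) = 0 := by
    linear_combination ((p'*(2*p^3) + (-2*p^4 + (q'-q)*p^2*(A*(q'+q)+2*B*(3*q'-q)*q^2) + (q'-q)^2*(2*B*q^3+A*q)^2)) * (4*B^2*q^8 + 4*A*B*q^6 + 8*B*q^4*p^2 + A^2*q^4 + 2*A*q^2*p^2 + p^4)^4) * hP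
      + ((-1)*A^10*q^19 + (3)*A^10*q^18*q' + (-3)*A^10*q^17*q'^2 + (1)*A^10*q^16*q'^3 + (-20)*A^9*B*q^21 + (60)*A^9*B*q^20*q' + (-60)*A^9*B*q^19*q'^2 + (20)*A^9*B*q^18*q'^3 + (-8)*A^9*q^17*p^2 + (24)*A^9*q^16*p^2*q' + (-24)*A^9*q^15*p^2*q'^2 + (8)*A^9*q^14*p^2*q'^3 + (-180)*A^8*B^2*q^23 + (540)*A^8*B^2*q^22*q' + (-540)*A^8*B^2*q^21*q'^2 + (180)*A^8*B^2*q^20*q'^3 + (-164)*A^8*B*q^19*p^2 + (492)*A^8*B*q^18*p^2*q' + (-492)*A^8*B*q^17*p^2*q'^2 + (164)*A^8*B*q^16*p^2*q'^3 + (-28)*A^8*q^15*p^4 + (84)*A^8*q^14*p^4*q' + (-84)*A^8*q^13*p^4*q'^2 + (28)*A^8*q^12*p^4*q'^3 + (-960)*A^7*B^3*q^25 + (2880)*A^7*B^3*q^24*q' + (-2880)*A^7*B^3*q^23*q'^2 + (960)*A^7*B^3*q^22*q'^3 + (-1472)*A^7*B^2*q^21*p^2 + (4416)*A^7*B^2*q^20*p^2*q'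 + (-4416)*A^7*B^2*q^19*p^2*q'^2 + (1472)*A^7*B^2*q^18*p^2*q'^3 + (-576)*A^7*B*q^17*p^4 + (1728)*A^7*B*q^16*p^4*q' + (-1728)*A^7*B*q^15*p^4*q'^2 + (576)*A^7*B*q^14*p^4*q'^3 + (-56)*A^7*q^13*p^6 + (168)*A^7*q^12*p^6*q' + (-168)*A^7*q^11*p^6*q'^2 + (56)*A^7*q^10*p^6*q'^3 + (-3360)*A^6*B^4*q^27 + (10080)*A^6*B^4*q^26*q' + (-10080)*A^6*B^4*q^25*q'^2 + (3360)*A^6*B^4*q^24*q'^3 + (-7616)*A^6*B^3*q^23*p^2 + (22848)*A^6*B^3*q^22*p^2*q' + (-22848)*A^6*B^3*q^21*p^2*q'^2 + (7616)*A^6*B^3*q^20*p^2*q'^3 + (-5088)*A^6*B^2*q^19*p^4 + (15264)*A^6*B^2*q^18*p^4*q' + (-15264)*A^6*B^2*q^17*p^4*q'^2 + (5088)*A^6*B^2*q^16*p^4*q'^3 + (-1136)*A^6*B*q^15*p^6 + (3408)*A^6*B*q^14*p^6*q' + (-3408)*A^6*B*q^13*p^6*q'^2 + (1136)*A^6*B*q^12*p^6*q'^3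 + (-70)*A^6*q^11*p^8 + (210)*A^6*q^10*p^8*q' + (-210)*A^6*q^9*p^8*q'^2 + (70)*A^6*q^8*p^8*q'^3 + (-8064)*A^5*B^5*q^29 + (24192)*A^5*B^5*q^28*q' + (-24192)*A^5*B^5*q^27*q'^2 + (8064)*A^5*B^5*q^26*q'^3 + (-25088)*A^5*B^4*q^25*p^2 + (75264)*A^5*B^4*q^24*p^2*q' + (-75264)*A^5*B^4*q^23*p^2*q'^2 + (25088)*A^5*B^4*q^22*p^2*q'^3 + (-25216)*A^5*B^3*q^21*p^4 + (75648)*A^5*B^3*q^20*p^4*q' + (-75648)*A^5*B^3*q^19*p^4*q'^2 + (25216)*A^5*B^3*q^18*p^4*q'^3 + (-9696)*A^5*B^2*q^17*p^6 + (29088)*A^5*B^2*q^16*p^6*q' + (-29088)*A^5*B^2*q^15*p^6*q'^2 + (9696)*A^5*B^2*q^14*p^6*q'^3 + (-1384)*A^5*B*q^13*p^8 + (4152)*A^5*B*q^12*p^8*q' + (-4152)*A^5*B*q^11*p^8*q'^2 + (1384)*A^5*B*q^10*p^8*q'^3 + (-56)*A^5*q^9*p^10 + (168)*A^5*q^8*p^10*q'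 + (-168)*A^5*q^7*p^10*q'^2 + (56)*A^5*q^6*p^10*q'^3 + (-13440)*A^4*B^6*q^31 + (40320)*A^4*B^6*q^30*q' + (-40320)*A^4*B^6*q^29*q'^2 + (13440)*A^4*B^6*q^28*q'^3 + (-54656)*A^4*B^5*q^27*p^2 + (163968)*A^4*B^5*q^26*p^2*q' + (-163968)*A^4*B^5*q^25*p^2*q'^2 + (54656)*A^4*B^5*q^24*p^2*q'^3 + (-76800)*A^4*B^4*q^23*p^4 + (230400)*A^4*B^4*q^22*p^4*q' + (-230400)*A^4*B^4*q^21*p^4*q'^2 + (76800)*A^4*B^4*q^20*p^4*q'^3 + (-45120)*A^4*B^3*q^19*p^6 + (135360)*A^4*B^3*q^18*p^6*q' + (-135360)*A^4*B^3*q^17*p^6*q'^2 + (45120)*A^4*B^3*q^16*p^6*q'^3 + (-11176)*A^4*B^2*q^15*p^8 + (33528)*A^4*B^2*q^14*p^8*q' + (-33528)*A^4*B^2*q^13*p^8*q'^2 + (11176)*A^4*B^2*q^12*p^8*q'^3 + (-1080)*A^4*B*q^11*p^10 + (3240)*A^4*B*q^10*p^10*q' + (-3240)*A^4*B*q^9*p^10*q'^2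 + (1080)*A^4*B*q^8*p^10*q'^3 + (-28)*A^4*q^7*p^12 + (84)*A^4*q^6*p^12*q' + (-84)*A^4*q^5*p^12*q'^2 + (28)*A^4*q^4*p^12*q'^3 + (-15360)*A^3*B^7*q^33 + (46080)*A^3*B^7*q^32*q' + (-46080)*A^3*B^7*q^31*q'^2 + (15360)*A^3*B^7*q^30*q'^3 + (-78848)*A^3*B^6*q^29*p^2 + (236544)*A^3*B^6*q^28*p^2*q' + (-236544)*A^3*B^6*q^27*p^2*q'^2 + (78848)*A^3*B^6*q^26*p^2*q'^3 + (-147456)*A^3*B^5*q^25*p^4 + (442368)*A^3*B^5*q^24*p^4*q' + (-442368)*A^3*B^5*q^23*p^4*q'^2 + (147456)*A^3*B^5*q^22*p^4*q'^3 + (-123520)*A^3*B^4*q^21*p^6 + (370560)*A^3*B^4*q^20*p^6*q' + (-370560)*A^3*B^4*q^19*p^6*q'^2 + (123520)*A^3*B^4*q^18*p^6*q'^3 + (-47296)*A^3*B^3*q^17*p^8 + (141888)*A^3*B^3*q^16*p^8*q' + (-141888)*A^3*B^3*q^15*p^8*q'^2 + (47296)*A^3*B^3*q^14*p^8*q'^3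 + (-8064)*A^3*B^2*q^13*p^10 + (24192)*A^3*B^2*q^12*p^10*q' + (-24192)*A^3*B^2*q^11*p^10*q'^2 + (8064)*A^3*B^2*q^10*p^10*q'^3 + (-544)*A^3*B*q^9*p^12 + (1632)*A^3*B*q^8*p^12*q' + (-1632)*A^3*B*q^7*p^12*q'^2 + (544)*A^3*B*q^6*p^12*q'^3 + (-8)*A^3*q^5*p^14 + (24)*A^3*q^4*p^14*q' + (-24)*A^3*q^3*p^14*q'^2 + (8)*A^3*q^2*p^14*q'^3 + (-11520)*A^2*B^8*q^35 + (34560)*A^2*B^8*q^34*q' + (-34560)*A^2*B^8*q^33*q'^2 + (11520)*A^2*B^8*q^32*q'^3 + (-72704)*A^2*B^7*q^31*p^2 + (218112)*A^2*B^7*q^30*p^2*q' + (-218112)*A^2*B^7*q^29*p^2*q'^2 + (72704)*A^2*B^7*q^28*p^2*q'^3 + (-174592)*A^2*B^6*q^27*p^4 + (523776)*A^2*B^6*q^26*p^4*q' + (-523776)*A^2*B^6*q^25*p^4*q'^2 + (174592)*A^2*B^6*q^24*p^4*q'^3 + (-198912)*A^2*B^5*q^23*p^6 + (596736)*A^2*B^5*q^22*p^6*q'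 + (-596736)*A^2*B^5*q^21*p^6*q'^2 + (198912)*A^2*B^5*q^20*p^6*q'^3 + (-110752)*A^2*B^4*q^19*p^8 + (332256)*A^2*B^4*q^18*p^8*q' + (-332256)*A^2*B^4*q^17*p^8*q'^2 + (110752)*A^2*B^4*q^16*p^8*q'^3 + (-29504)*A^2*B^3*q^15*p^10 + (88512)*A^2*B^3*q^14*p^10*q' + (-88512)*A^2*B^3*q^13*p^10*q'^2 + (29504)*A^2*B^3*q^12*p^10*q'^3 + (-3648)*A^2*B^2*q^11*p^12 + (10944)*A^2*B^2*q^10*p^12*q' + (-10944)*A^2*B^2*q^9*p^12*q'^2 + (3648)*A^2*B^2*q^8*p^12*q'^3 + (-176)*A^2*B*q^7*p^14 + (528)*A^2*B*q^6*p^14*q' + (-528)*A^2*B*q^5*p^14*q'^2 + (176)*A^2*B*q^4*p^14*q'^3 + (-1)*A^2*q^3*p^16 + (3)*A^2*q^2*p^16*q' + (-3)*A^2*q*p^16*q'^2 + (1)*A^2*p^16*q'^3 + (-5120)*A*B^9*q^37 + (15360)*A*B^9*q^36*q' + (-15360)*A*B^9*q^35*q'^2 + (5120)*A*B^9*q^34*q'^3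 + (-38912)*A*B^8*q^33*p^2 + (116736)*A*B^8*q^32*p^2*q' + (-116736)*A*B^8*q^31*p^2*q'^2 + (38912)*A*B^8*q^30*p^2*q'^3 + (-116736)*A*B^7*q^29*p^4 + (350208)*A*B^7*q^28*p^4*q' + (-350208)*A*B^7*q^27*p^4*q'^2 + (116736)*A*B^7*q^26*p^4*q'^3 + (-174592)*A*B^6*q^25*p^6 + (523776)*A*B^6*q^24*p^6*q' + (-523776)*A*B^6*q^23*p^6*q'^2 + (174592)*A*B^6*q^22*p^6*q'^3 + (-135808)*A*B^5*q^21*p^8 + (407424)*A*B^5*q^20*p^8*q' + (-407424)*A*B^5*q^19*p^8*q'^2 + (135808)*A*B^5*q^18*p^8*q'^3 + (-53376)*A*B^4*q^17*p^10 + (160128)*A*B^4*q^16*p^10*q' + (-160128)*A*B^4*q^15*p^10*q'^2 + (53376)*A*B^4*q^14*p^10*q'^3 + (-10496)*A*B^3*q^13*p^12 + (31488)*A*B^3*q^12*p^12*q' + (-31488)*A*B^3*q^11*p^12*q'^2 + (10496)*A*B^3*q^10*p^12*q'^3 + (-992)*A*B^2*q^9*p^14 + (2976)*A*B^2*q^8*p^14*q'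 + (-2976)*A*B^2*q^7*p^14*q'^2 + (992)*A*B^2*q^6*p^14*q'^3 + (-36)*A*B*q^5*p^16 + (108)*A*B*q^4*p^16*q' + (-108)*A*B*q^3*p^16*q'^2 + (36)*A*B*q^2*p^16*q'^3 + (-1024)*B^10*q^39 + (3072)*B^10*q^38*q' + (-3072)*B^10*q^37*q'^2 + (1024)*B^10*q^36*q'^3 + (-9216)*B^9*q^35*p^2 + (27648)*B^9*q^34*p^2*q' + (-27648)*B^9*q^33*p^2*q'^2 + (9216)*B^9*q^32*p^2*q'^3 + (-33792)*B^8*q^31*p^4 + (101376)*B^8*q^30*p^4*q' + (-101376)*B^8*q^29*p^4*q'^2 + (33792)*B^8*q^28*p^4*q'^3 + (-64512)*B^7*q^27*p^6 + (193536)*B^7*q^26*p^6*q' + (-193536)*B^7*q^25*p^6*q'^2 + (64512)*B^7*q^24*p^6*q'^3 + (-67968)*B^6*q^23*p^8 + (203904)*B^6*q^22*p^8*q' + (-203904)*B^6*q^21*p^8*q'^2 + (67968)*B^6*q^20*p^8*q'^3 + (-38784)*B^5*q^19*p^10 + (116352)*B^5*q^18*p^10*q' + (-116352)*B^5*q^17*p^10*q'^2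 + (38784)*B^5*q^16*p^10*q'^3 + (-11328)*B^4*q^15*p^12 + (33984)*B^4*q^14*p^12*q' + (-33984)*B^4*q^13*p^12*q'^2 + (11328)*B^4*q^12*p^12*q'^3 + (-1728)*B^3*q^11*p^14 + (5184)*B^3*q^10*p^14*q' + (-5184)*B^3*q^9*p^14*q'^2 + (1728)*B^3*q^8*p^14*q'^3 + (-132)*B^2*q^7*p^16 + (396)*B^2*q^6*p^16*q' + (-396)*B^2*q^5*p^16*q'^2 + (132)*B^2*q^4*p^16*q'^3 + (-4)*B*q^3*p^18 + (12)*B*q^2*p^18*q' + (-12)*B*q*p^18*q'^2 + (4)*B*p^18*q'^3) * hqD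
  have hne : (4:ℂ)*p^6*(4*B^2*q^8 + 4*A*B*q^6 + 8*B*q^4*p^2 + A^2*q^4 + 2*A*q^2*p^2 + p^4)^4 ≠ 0 := by
    exact mul_ne_zero (mul_ne_zero (by norm_num) (pow_ne_zero _ hp)) (pow_ne_zero _ hD0)
  have := (mul_eq_zero.mp hzero).resolve_right hne
  exact sub_eq_zero.mp this
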